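/- Let n ≥ 2 be an integer, let a ≥ 0 be a real number, and let z be a complex number with z^n = 1. Then e^{2a·Re(z)} = ∑_{j=0}^{n−1} z^j φ̂_a(j); in particular the right-hand side is a real number. -/

import Mathlib

open scoped BigOperators

noncomputable def psi (n : ℕ) (a : ℝ) (j : ℕ) : ℝ :=
  ∑' k : ℕ, a ^ (j + k * n) / (Nat.factorial (j + k * n) : ℝ)

noncomputable def phiHat (n : ℕ) (a : ℝ) (j : ℤ) : ℝ :=
  ∑ k ∈ Finset.range n, ∑ k' ∈ Finset.range n,
    if ((k' : ℤ) - (k : ℤ)) % (n : ℤ) = j % (n : ℤ) then psi n a k * psi n a k' else 0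

noncomputable def phi (n : ℕ) (a : ℝ) (j : ℤ) : ℝ :=
  phiHat n a j / phiHat n a 0

noncomputable def eps (n : ℕ) (a : ℝ) : ℝ :=
  (1 + 2 * a * Real.exp a) * (1 + a ^ n * Real.exp a / (Nat.factorial n : ℝ)) ^ 2 - 1

noncomputable def zeta (n : ℕ) (a : ℝ) : ℝ :=
  ∑ j ∈ Finset.Ico 1 n, phi n a (j : ℤ)

noncomputable def xi (n : ℕ) (a : ℝ) : ℝ :=
  sSup ((fun j : ℕ => phi n a (j : ℤ)) '' Set.Ico 1 n)

noncomputable def eta (n : ℕ) (a : ℝ) : ℝ :=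
  sInf ((fun j : ℕ => phi n a ((j : ℤ) + 1) / phi n a (j : ℤ)) '' Set.Iio n)

noncomputable def alpha (n : ℕ) (b k : ℝ) : ℝ :=
  (∑ j ∈ Finset.range n,
      phi n b (j : ℤ) * (phi n k (j : ℤ)) ^ 4 *
        (phi n k ((j : ℤ) + 1) / (phi n k (j : ℤ) * phi n k 1))) /
    (∑ j ∈ Finset.range n, phi n b (j : ℤ) * (phi n k (j : ℤ)) ^ 4)

noncomputable def rho (n : ℕ) (g : ℕ) : ℂ :=
  Complex.exp (2 * (Real.pi : ℂ) * Complex.I * (g : ℂ) / (n : ℂ))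

noncomputable def etaHat (n : ℕ) (a : ℝ) : ℂ :=
  (∑ g ∈ Finset.range n, rho n g * (Real.exp (2 * a * (rho n g).re) : ℂ)) /
    (∑ g ∈ Finset.range n, (Real.exp (2 * a * (rho n g).re) : ℂ))

lemma psi_summable (n : ℕ) (hn : 0 < n) (a : ℝ) (j : ℕ) :
    Summable (fun k : ℕ => a ^ (j + k * n) / (Nat.factorial (j + k * n) : ℝ)) := by
  have hinj : Function.Injective (fun k : ℕ => j + k * n) := by
    intro k1 k2 h
    simp only at h
    exact Nat.eq_of_mul_eq_mul_right hn (Nat.add_left_cancel h)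
  exact (Real.summable_pow_div_factorial a).comp_injective hinj

lemma key (n : ℕ) (hn : 0 < n) (a : ℝ) (z : ℂ) (hz : z ^ n = 1) :
    ∑ j ∈ Finset.range n, z ^ j * (psi n a j : ℂ) = Complex.exp (a * z) := by
  haveI : NeZero n := ⟨hn.ne'⟩
  have h0 : HasSum (fun m : ℕ => ((a : ℂ) * z) ^ m / (Nat.factorial m : ℂ))
      (Complex.exp (a * z)) := by
    rw [Complex.exp_eq_exp_ℂ]
    exact NormedSpace.expSeries_div_hasSum_exp ((a : ℂ) * z)
  have h1 := ((Equiv.prodComm (Fin n) ℕ).trans (Nat.divModEquiv n).symm).hasSum_iff.mpr h0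
  simp only [Function.comp_def, Equiv.trans_apply, Equiv.prodComm_apply, Prod.swap_prod_mk,
    Nat.divModEquiv_symm_apply] at h1
  have h2 : HasSum (fun j : Fin n => z ^ (j : ℕ) * (psi n a j : ℂ)) (Complex.exp (a * z)) := by
    refine h1.prod_fiberwise fun j => ?_
    have hs := (psi_summable n hn a j).hasSum
    have hsC : HasSum (fun k : ℕ => ((a ^ ((j:ℕ) + k * n) / (Nat.factorial ((j:ℕ) + k * n) : ℝ) : ℝ) : ℂ))
        ((psi n a j : ℝ) : ℂ) := Complex.hasSum_ofReal.mpr hs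
    have := hsC.mul_left (z ^ (j : ℕ))
    convert this using 2 with k
    · rfl
    simp only [Prod.swap_prod_mk]
    push_cast
    rw [mul_pow, add_comm (k * n) (j : ℕ), pow_add z, mul_comm k n, pow_mul, hz, one_pow, mul_one]
    ring
  have := h2.unique (hasSum_fintype _)
  rw [← Fin.sum_univ_eq_sum_range (fun j => z ^ j * (psi n a j : ℂ)) n]
  exact this.symm

theorem statement1 (n : ℕ) (hn : 2 ≤ n) (a : ℝ) (ha : 0 ≤ a) (z : ℂ) (hz : z ^ n = 1) :
    (Real.exp (2 * a * z.re) : ℂ) =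
      ∑ j ∈ Finset.range n, z ^ j * (phiHat n a (j : ℤ) : ℂ) := by
  have hn0 : 0 < n := by omega
  have hz0 : z ≠ 0 := by
    intro h; rw [h, zero_pow hn0.ne'] at hz; exact zero_ne_one hz
  have hnz : (n : ℤ) ≠ 0 := by exact_mod_cast hn0.ne'
  have hzint : z ^ (n : ℤ) = 1 := by rw [zpow_natCast]; exact hz
  have hmod : ∀ m : ℤ, z ^ (m % (n : ℤ)) = z ^ m := by
    intro m
    conv_rhs => rw [← Int.emod_add_mul_ediv m (n : ℤ)]
    rw [zpow_add₀ hz0, zpow_mul, hzint, one_zpow, mul_one]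
  have hinv : (z⁻¹) ^ n = 1 := by rw [inv_pow, hz, inv_one]
  have hconj : z⁻¹ = (starRingEnd ℂ) z := by
    have hns : (Complex.normSq z : ℂ) ^ n = 1 := by
      rw [← Complex.mul_conj, mul_pow, ← map_pow, hz, map_one, mul_one]
    have hns' : Complex.normSq z ^ n = 1 := by exact_mod_cast hns
    have h1 : Complex.normSq z = 1 :=
      (pow_left_strictMonoOn₀ (M₀ := ℝ) hn0.ne').injOn
        (Set.mem_setOf.mpr (Complex.normSq_nonneg z))
        (Set.mem_setOf.mpr zero_le_one) (by simpa using hns')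
    exact inv_eq_of_mul_eq_one_right (by rw [Complex.mul_conj, h1, Complex.ofReal_one])
  have main : ∑ j ∈ Finset.range n, z ^ j * (phiHat n a (j : ℤ) : ℂ) =
      (∑ k ∈ Finset.range n, (z⁻¹) ^ k * (psi n a k : ℂ)) *
      (∑ k' ∈ Finset.range n, z ^ k' * (psi n a k' : ℂ)) := by
    have step1 : ∑ j ∈ Finset.range n, z ^ j * (phiHat n a (j : ℤ) : ℂ)
        = ∑ k ∈ Finset.range n, ∑ k' ∈ Finset.range n, ∑ j ∈ Finset.range n,
            (if ((k' : ℤ) - (k : ℤ)) % (n : ℤ) = (j : ℤ) % (n : ℤ)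
              then z ^ j * ((psi n a k : ℂ) * (psi n a k' : ℂ)) else 0) := by
      unfold phiHat
      push_cast [apply_ite (fun x : ℝ => (x : ℂ))]
      simp only [Finset.mul_sum, mul_ite, mul_zero]
      rw [Finset.sum_comm]
      exact Finset.sum_congr rfl fun k _ => Finset.sum_comm
    rw [step1, Finset.sum_mul_sum]
    refine Finset.sum_congr rfl fun k hk => ?_
    refine Finset.sum_congr rfl fun k' hk' => ?_
    set m : ℤ := (k' : ℤ) - (k : ℤ) with hm
    set j0 : ℕ := (m % (n : ℤ)).toNat with hj0
    have hnonneg : 0 ≤ m % (n : ℤ) := Int.emod_nonneg m hnz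
    have hj0cast : (j0 : ℤ) = m % (n : ℤ) := Int.toNat_of_nonneg hnonneg
    have hj0lt : j0 < n := by
      have := Int.emod_lt_of_pos m (by exact_mod_cast hn0 : (0:ℤ) < (n:ℤ))
      omega
    have hcondeq : ∀ j ∈ Finset.range n,
        (if m % (n : ℤ) = (j : ℤ) % (n : ℤ) then z ^ j * ((psi n a k : ℂ) * (psi n a k' : ℂ)) else 0)
          = (if j = j0 then z ^ j * ((psi n a k : ℂ) * (psi n a k' : ℂ)) else 0) := by
      intro j hj
      have hjlt : j < n := Finset.mem_range.mp hj
      have : (j : ℤ) % (n : ℤ) = (j : ℤ) := Int.emod_eq_of_lt (by positivity) (by exact_mod_cast hjlt)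
      rw [this]
      congr 1
      simp only [eq_iff_iff]
      constructor
      · intro h; omega
      · intro h; omega
    rw [Finset.sum_congr rfl hcondeq, Finset.sum_ite_eq' (Finset.range n) j0,
      if_pos (Finset.mem_range.mpr hj0lt)]
    have hzj0 : z ^ j0 = (z⁻¹) ^ k * z ^ k' := by
      rw [← zpow_natCast z j0, hj0cast, hmod, hm, zpow_sub₀ hz0, zpow_natCast, zpow_natCast,
        div_eq_mul_inv, mul_comm, inv_pow]
    rw [hzj0]
    ring
  rw [main, key n hn0 a z⁻¹ hinv, key n hn0 a z hz, ← Complex.exp_add, hconj]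
  rw [Complex.ofReal_exp]
  congr 1
  have : (a : ℂ) * (starRingEnd ℂ) z + (a : ℂ) * z = (a : ℂ) * (z + (starRingEnd ℂ) z) := by ring
  rw [this, Complex.add_conj]
  push_cast
  ring
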